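/- Let p ≥ 2 and let f, g be p-integrable vector fields on a measure space. Then ‖|g|^{p−2} g − |f|^{p−2} f‖_{p'} ≤ (p − 1) · 2^{(p−2)/p} · (‖f‖_p^p + ‖g‖_p^p)^{(p−2)/p} · ‖g − f‖_p. -/

import Mathlib

open MeasureTheory

lemma flux_aux_scalar {α t s : ℝ} (hα : 0 ≤ α) (ht : 0 ≤ t) (hts : t ≤ s) :
    (s ^ α - t ^ α) * t ≤ α * s ^ α * (s - t) := by
  have hs : 0 ≤ s := ht.trans hts
  rcases eq_or_lt_of_le hs with hs0 | hspos
  · have ht0 : t = 0 := le_antisymm (hts.trans hs0.ge) ht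
    simp [← hs0, ht0]
  rcases le_or_gt 1 α with h1 | h1
  · -- Bernoulli: 1 + α*(t/s - 1) ≤ (t/s)^α
    have hx : -1 ≤ t / s - 1 := by
      have : 0 ≤ t / s := div_nonneg ht hspos.le
      linarith
    have hb := one_add_mul_self_le_rpow_one_add hx h1
    rw [add_sub_cancel] at hb
    have hdiv : (t / s) ^ α = t ^ α / s ^ α := Real.div_rpow ht hspos.le α
    rw [hdiv] at hb
    have hsα : 0 < s ^ α := Real.rpow_pos_of_pos hspos α
    -- multiply by s^α : s^α + α*s^α*(t/s-1) ≤ t^α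
    have h2 : s ^ α - t ^ α ≤ α * s ^ α * (1 - t / s) := by
      have := mul_le_mul_of_nonneg_right hb hsα.le
      rw [add_mul, div_mul_cancel₀ _ hsα.ne'] at this
      nlinarith
    have hts' : t / s ≤ 1 := (div_le_one hspos).2 hts
    have h3 : (s ^ α - t ^ α) * t ≤ α * s ^ α * (1 - t / s) * t := by
      apply mul_le_mul_of_nonneg_right h2 ht
    calc (s ^ α - t ^ α) * t ≤ α * s ^ α * (1 - t / s) * t := h3
      _ = α * s ^ α * (s - t) * (t / s) := by field_simp
      _ ≤ α * s ^ α * (s - t) * 1 := by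
          apply mul_le_mul_of_nonneg_left hts'
          have : 0 ≤ s - t := by linarith
          positivity
      _ = α * s ^ α * (s - t) := by ring
  · rcases eq_or_lt_of_le ht with ht0 | htpos
    · rw [← ht0]
      have h4 : (0:ℝ) ≤ s - 0 := by linarith
      have : 0 ≤ α * s ^ α * (s - 0) := by
        apply mul_nonneg (mul_nonneg hα (Real.rpow_nonneg hs α)) h4
      simpa using this
    -- Bernoulli reverse: (s/t)^α ≤ 1 + α*(s/t - 1)
    have hx : -1 ≤ s / t - 1 := by
      have : 0 ≤ s / t := div_nonneg hs ht
      linarith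
    have hb := rpow_one_add_le_one_add_mul_self hx hα h1.le
    rw [add_sub_cancel] at hb
    have hdiv : (s / t) ^ α = s ^ α / t ^ α := Real.div_rpow hs htpos.le α
    rw [hdiv] at hb
    have htα : 0 < t ^ α := Real.rpow_pos_of_pos htpos α
    have h2 : s ^ α - t ^ α ≤ α * t ^ α * (s / t - 1) := by
      have := mul_le_mul_of_nonneg_right hb htα.le
      rw [div_mul_cancel₀ _ htα.ne'] at this
      nlinarith
    have htt : t ^ α ≤ s ^ α := Real.rpow_le_rpow ht hts hα
    calc (s ^ α - t ^ α) * t ≤ α * t ^ α * (s / t - 1) * t := by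
          apply mul_le_mul_of_nonneg_right h2 ht
      _ = α * t ^ α * (s - t) := by field_simp
      _ ≤ α * s ^ α * (s - t) := by
          have h4 : 0 ≤ s - t := by linarith
          have := mul_le_mul_of_nonneg_right (mul_le_mul_of_nonneg_left htt hα) h4
          linarith

lemma flux_aux_vec_le {p : ℝ} (hp : 2 ≤ p) {E : Type*} [NormedAddCommGroup E]
    [NormedSpace ℝ E] {a b : E} (hab : ‖a‖ ≤ ‖b‖) :
    ‖‖b‖ ^ (p - 2) • b - ‖a‖ ^ (p - 2) • a‖ ≤ (p - 1) * ‖b‖ ^ (p - 2) * ‖b - a‖ := by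
  have hα : (0:ℝ) ≤ p - 2 := by linarith
  have hsplit : ‖b‖ ^ (p - 2) • b - ‖a‖ ^ (p - 2) • a
      = ‖b‖ ^ (p - 2) • (b - a) + (‖b‖ ^ (p - 2) - ‖a‖ ^ (p - 2)) • a := by
    rw [smul_sub, sub_smul]; abel
  rw [hsplit]
  have hmono : ‖a‖ ^ (p - 2) ≤ ‖b‖ ^ (p - 2) :=
    Real.rpow_le_rpow (norm_nonneg a) hab hα
  have h1 : ‖(‖b‖ ^ (p - 2)) • (b - a)‖ = ‖b‖ ^ (p - 2) * ‖b - a‖ := by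
    rw [norm_smul, Real.norm_eq_abs, abs_of_nonneg (Real.rpow_nonneg (norm_nonneg b) _)]
  have h2 : ‖(‖b‖ ^ (p - 2) - ‖a‖ ^ (p - 2)) • a‖ = (‖b‖ ^ (p - 2) - ‖a‖ ^ (p - 2)) * ‖a‖ := by
    rw [norm_smul, Real.norm_eq_abs, abs_of_nonneg (by linarith)]
  have hscalar : (‖b‖ ^ (p - 2) - ‖a‖ ^ (p - 2)) * ‖a‖
      ≤ (p - 2) * ‖b‖ ^ (p - 2) * (‖b‖ - ‖a‖) :=
    flux_aux_scalar hα (norm_nonneg a) hab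
  have hnn : ‖b‖ - ‖a‖ ≤ ‖b - a‖ := norm_sub_norm_le b a
  have h3 : (p - 2) * ‖b‖ ^ (p - 2) * (‖b‖ - ‖a‖) ≤ (p - 2) * ‖b‖ ^ (p - 2) * ‖b - a‖ := by
    apply mul_le_mul_of_nonneg_left hnn; positivity
  calc ‖(‖b‖ ^ (p - 2)) • (b - a) + (‖b‖ ^ (p - 2) - ‖a‖ ^ (p - 2)) • a‖
      ≤ ‖(‖b‖ ^ (p - 2)) • (b - a)‖ + ‖(‖b‖ ^ (p - 2) - ‖a‖ ^ (p - 2)) • a‖ := norm_add_le _ _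
    _ ≤ ‖b‖ ^ (p - 2) * ‖b - a‖ + (p - 2) * ‖b‖ ^ (p - 2) * ‖b - a‖ := by
        rw [h1, h2]; linarith [hscalar.trans h3]
    _ = (p - 1) * ‖b‖ ^ (p - 2) * ‖b - a‖ := by ring

lemma flux_aux_vec {p : ℝ} (hp : 2 ≤ p) {E : Type*} [NormedAddCommGroup E]
    [NormedSpace ℝ E] (a b : E) :
    ‖‖b‖ ^ (p - 2) • b - ‖a‖ ^ (p - 2) • a‖
      ≤ (p - 1) * max ‖a‖ ‖b‖ ^ (p - 2) * ‖b - a‖ := by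
  rcases le_total ‖a‖ ‖b‖ with h | h
  · rw [max_eq_right h]
    exact flux_aux_vec_le hp h
  · rw [max_eq_left h]
    have h1 := flux_aux_vec_le hp (a := b) (b := a) h
    rw [show ‖‖b‖ ^ (p - 2) • b - ‖a‖ ^ (p - 2) • a‖
        = ‖‖a‖ ^ (p - 2) • a - ‖b‖ ^ (p - 2) • b‖ from norm_sub_rev _ _,
      show ‖b - a‖ = ‖a - b‖ from norm_sub_rev _ _]
    exact h1


section helpers

lemma flux_memLp {Ω : Type*} [MeasurableSpace Ω] {μ : Measure Ω} {h : Ω → ℝ}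
    (h0 : ∀ x, 0 ≤ h x) (hm : AEStronglyMeasurable h μ) {s : ℝ} (hs : 1 ≤ s)
    (hint : Integrable (fun x => h x ^ s) μ) : MemLp h (ENNReal.ofReal s) μ := by
  have hs0 : (0:ℝ) < s := lt_of_lt_of_le one_pos hs
  have hne : ENNReal.ofReal s ≠ 0 := by
    simp [ENNReal.ofReal_eq_zero, not_le, hs0]
  have hnt : ENNReal.ofReal s ≠ ⊤ := ENNReal.ofReal_ne_top
  have hiff := memLp_norm_rpow_iff (p := ENNReal.ofReal s) (q := ENNReal.ofReal s) hm hne hnt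
  rw [ENNReal.div_self hne hnt] at hiff
  refine hiff.mp ?_
  rw [memLp_one_iff_integrable]
  refine hint.congr (Filter.Eventually.of_forall fun x => ?_)
  simp only []
  rw [Real.norm_eq_abs, abs_of_nonneg (h0 x), ENNReal.toReal_ofReal hs0.le]

end helpers

/-- Flux deviation estimate for `p ≥ 2`:
`‖ |g|^{p-2} g - |f|^{p-2} f ‖_{p'} ≤ (p-1) 2^{(p-2)/p} (‖f‖_p^p + ‖g‖_p^p)^{(p-2)/p} ‖g - f‖_p`. -/
theorem flux_deviation_p_ge_two
    (p : ℝ) (hp : 2 ≤ p)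
    (N : ℕ) (hN : 1 ≤ N)
    {Ω : Type*} [MeasurableSpace Ω] (μ : Measure Ω)
    (f g : Ω → EuclideanSpace ℝ (Fin N))
    (hfm : Measurable f) (hgm : Measurable g)
    (hfp : ∫⁻ x, ENNReal.ofReal (‖f x‖ ^ p) ∂μ < ⊤)
    (hgp : ∫⁻ x, ENNReal.ofReal (‖g x‖ ^ p) ∂μ < ⊤) :
    (∫ x, ‖‖g x‖ ^ (p - 2) • g x - ‖f x‖ ^ (p - 2) • f x‖ ^ (p / (p - 1)) ∂μ)
        ^ (1 / (p / (p - 1)))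
      ≤ (p - 1) * (2 : ℝ) ^ ((p - 2) / p)
          * ((∫ x, ‖f x‖ ^ p ∂μ) + ∫ x, ‖g x‖ ^ p ∂μ) ^ ((p - 2) / p)
          * (∫ x, ‖g x - f x‖ ^ p ∂μ) ^ (1 / p) := by
  have hp0 : (0:ℝ) < p := by linarith
  -- basic nonnegativity
  have hAnn : (0:ℝ) ≤ ∫ x, ‖f x‖ ^ p ∂μ :=
    integral_nonneg fun x => Real.rpow_nonneg (norm_nonneg _) p
  have hBnn : (0:ℝ) ≤ ∫ x, ‖g x‖ ^ p ∂μ :=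
    integral_nonneg fun x => Real.rpow_nonneg (norm_nonneg _) p
  have hDnn : (0:ℝ) ≤ ∫ x, ‖g x - f x‖ ^ p ∂μ :=
    integral_nonneg fun x => Real.rpow_nonneg (norm_nonneg _) p
  -- integrability
  have hmA : Measurable fun x => ‖f x‖ ^ p := hfm.norm.pow_const p
  have hmB : Measurable fun x => ‖g x‖ ^ p := hgm.norm.pow_const p
  have intA : Integrable (fun x => ‖f x‖ ^ p) μ := by
    refine ⟨hmA.aestronglyMeasurable, ?_⟩
    rw [hasFiniteIntegral_iff_ofReal
      (Filter.Eventually.of_forall fun x => Real.rpow_nonneg (norm_nonneg _) p)]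
    exact hfp
  have intB : Integrable (fun x => ‖g x‖ ^ p) μ := by
    refine ⟨hmB.aestronglyMeasurable, ?_⟩
    rw [hasFiniteIntegral_iff_ofReal
      (Filter.Eventually.of_forall fun x => Real.rpow_nonneg (norm_nonneg _) p)]
    exact hgp
  have intu : Integrable (fun x => ‖f x‖ ^ p + ‖g x‖ ^ p) μ := intA.add intB
  have hmv : Measurable fun x => ‖g x - f x‖ ^ p := (hgm.sub hfm).norm.pow_const p
  have hmaxle : ∀ x, max ‖f x‖ ‖g x‖ ^ p ≤ ‖f x‖ ^ p + ‖g x‖ ^ p := by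
    intro x
    rcases max_cases ‖f x‖ ‖g x‖ with ⟨hm, _⟩ | ⟨hm, _⟩ <;> rw [hm]
    · exact le_add_of_nonneg_right (Real.rpow_nonneg (norm_nonneg _) p)
    · exact le_add_of_nonneg_left (Real.rpow_nonneg (norm_nonneg _) p)
  have intv : Integrable (fun x => ‖g x - f x‖ ^ p) μ := by
    refine Integrable.mono' (intu.const_mul ((2:ℝ) ^ p)) hmv.aestronglyMeasurable
      (Filter.Eventually.of_forall fun x => ?_)
    rw [Real.norm_of_nonneg (Real.rpow_nonneg (norm_nonneg _) p)]
    have h1 : ‖g x - f x‖ ≤ 2 * max ‖f x‖ ‖g x‖ := by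
      calc ‖g x - f x‖ ≤ ‖g x‖ + ‖f x‖ := norm_sub_le _ _
        _ ≤ max ‖f x‖ ‖g x‖ + max ‖f x‖ ‖g x‖ :=
            add_le_add (le_max_right _ _) (le_max_left _ _)
        _ = 2 * max ‖f x‖ ‖g x‖ := by ring
    calc ‖g x - f x‖ ^ p ≤ (2 * max ‖f x‖ ‖g x‖) ^ p :=
          Real.rpow_le_rpow (norm_nonneg _) h1 hp0.le
      _ = 2 ^ p * max ‖f x‖ ‖g x‖ ^ p :=
          Real.mul_rpow (by norm_num) (le_max_of_le_left (norm_nonneg _))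
      _ ≤ 2 ^ p * (‖f x‖ ^ p + ‖g x‖ ^ p) := by
          apply mul_le_mul_of_nonneg_left (hmaxle x)
          positivity
  rcases eq_or_lt_of_le hp with hp2 | hpgt
  · -- p = 2 : both sides are equal
    subst hp2
    have he : ∀ x : Ω, ‖‖g x‖ ^ ((2:ℝ) - 2) • g x - ‖f x‖ ^ ((2:ℝ) - 2) • f x‖
        ^ ((2:ℝ) / (2 - 1)) = ‖g x - f x‖ ^ (2:ℝ) := by
      intro x
      norm_num [Real.rpow_zero]
    rw [integral_congr_ae (Filter.Eventually.of_forall he)]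
    norm_num [Real.rpow_zero]
  · -- main case 2 < p
    have hp1 : (0:ℝ) < p - 1 := by linarith
    have hp2' : (0:ℝ) < p - 2 := by linarith
    set q : ℝ := p / (p - 1) with hq
    have hq0 : 0 < q := div_pos hp0 hp1
    set s : ℝ := (p - 1) / (p - 2) with hs
    set s' : ℝ := p - 1 with hs'
    have hconj : Real.HolderConjugate s s' := by
      rw [Real.holderConjugate_iff]
      constructor
      · rw [hs]; exact (one_lt_div hp2').2 (by linarith)
      · rw [hs, hs', inv_div, ← one_div, ← add_div, show p - 2 + 1 = p - 1 by ring]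
        exact div_self (ne_of_gt hp1)
    set α : ℝ := (p - 2) / (p - 1) with hα
    have hαnn : (0:ℝ) ≤ α := le_of_lt (div_pos hp2' hp1)
    have hαs : α * s = 1 := by rw [hα, hs]; field_simp; exact div_self (ne_of_gt hp1)
    have hqs' : q * s' = p := by rw [hq, hs']; field_simp; exact div_self (ne_of_gt hp1)
    -- pointwise bound
    have hpt : ∀ x : Ω, ‖‖g x‖ ^ (p - 2) • g x - ‖f x‖ ^ (p - 2) • f x‖ ^ q
        ≤ (p - 1) ^ q * ((‖f x‖ ^ p + ‖g x‖ ^ p) ^ α * ‖g x - f x‖ ^ q) := by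
      intro x
      have hmax0 : (0:ℝ) ≤ max ‖f x‖ ‖g x‖ := le_max_of_le_left (norm_nonneg _)
      have hu0 : (0:ℝ) ≤ ‖f x‖ ^ p + ‖g x‖ ^ p := by positivity
      have hmaxp : max ‖f x‖ ‖g x‖ ^ (p - 2)
          ≤ (‖f x‖ ^ p + ‖g x‖ ^ p) ^ ((p - 2) / p) := by
        have h1 : max ‖f x‖ ‖g x‖ ^ (p - 2) = (max ‖f x‖ ‖g x‖ ^ p) ^ ((p - 2) / p) := by
          rw [← Real.rpow_mul hmax0]
          congr 1
          field_simp
        rw [h1]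
        exact Real.rpow_le_rpow (Real.rpow_nonneg hmax0 p) (hmaxle x) (by positivity)
      have h3 : ‖‖g x‖ ^ (p - 2) • g x - ‖f x‖ ^ (p - 2) • f x‖
          ≤ (p - 1) * ((‖f x‖ ^ p + ‖g x‖ ^ p) ^ ((p - 2) / p) * ‖g x - f x‖) := by
        calc ‖‖g x‖ ^ (p - 2) • g x - ‖f x‖ ^ (p - 2) • f x‖
            ≤ (p - 1) * max ‖f x‖ ‖g x‖ ^ (p - 2) * ‖g x - f x‖ := flux_aux_vec hp (f x) (g x)
          _ ≤ (p - 1) * (‖f x‖ ^ p + ‖g x‖ ^ p) ^ ((p - 2) / p) * ‖g x - f x‖ := by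
              apply mul_le_mul_of_nonneg_right
                (mul_le_mul_of_nonneg_left hmaxp (by linarith)) (norm_nonneg _)
          _ = (p - 1) * ((‖f x‖ ^ p + ‖g x‖ ^ p) ^ ((p - 2) / p) * ‖g x - f x‖) := by ring
      have h4 := Real.rpow_le_rpow (norm_nonneg _) h3 hq0.le
      refine h4.trans (le_of_eq ?_)
      rw [Real.mul_rpow (by linarith : (0:ℝ) ≤ p - 1)
            (mul_nonneg (Real.rpow_nonneg hu0 _) (norm_nonneg _)),
          Real.mul_rpow (Real.rpow_nonneg hu0 _) (norm_nonneg _),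
          ← Real.rpow_mul hu0]
      rw [show (p - 2) / p * q = α by rw [hq, hα]; field_simp; exact (div_self (ne_of_gt hp1)).symm]
    -- Memℒp facts for Hölder
    have hmu : Measurable fun x => (‖f x‖ ^ p + ‖g x‖ ^ p) ^ α := (hmA.add hmB).pow_const α
    have hml1 : MemLp (fun x => (‖f x‖ ^ p + ‖g x‖ ^ p) ^ α) (ENNReal.ofReal s) μ := by
      refine flux_memLp (fun x => Real.rpow_nonneg (by positivity) α)
        hmu.aestronglyMeasurable hconj.lt.le ?_
      refine intu.congr (Filter.Eventually.of_forall fun x => ?_)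
      have hu0 : (0:ℝ) ≤ ‖f x‖ ^ p + ‖g x‖ ^ p := by positivity
      have : ((‖f x‖ ^ p + ‖g x‖ ^ p) ^ α) ^ s = ‖f x‖ ^ p + ‖g x‖ ^ p := by
        rw [← Real.rpow_mul hu0, hαs, Real.rpow_one]
      exact this.symm
    have hml2 : MemLp (fun x => ‖g x - f x‖ ^ q) (ENNReal.ofReal s') μ := by
      refine flux_memLp (fun x => Real.rpow_nonneg (norm_nonneg _) q)
        ((hgm.sub hfm).norm.pow_const q).aestronglyMeasurable (by rw [hs']; linarith) ?_
      refine intv.congr (Filter.Eventually.of_forall fun x => ?_)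
      have : (‖g x - f x‖ ^ q) ^ s' = ‖g x - f x‖ ^ p := by
        rw [← Real.rpow_mul (norm_nonneg _), hqs']
      exact this.symm
    -- integrability of the product via Young's inequality
    have intprod : Integrable
        (fun x => (‖f x‖ ^ p + ‖g x‖ ^ p) ^ α * ‖g x - f x‖ ^ q) μ := by
      refine Integrable.mono' ((intu.div_const s).add (intv.div_const s'))
        (hmu.mul ((hgm.sub hfm).norm.pow_const q)).aestronglyMeasurable
        (Filter.Eventually.of_forall fun x => ?_)
      have hu0 : (0:ℝ) ≤ ‖f x‖ ^ p + ‖g x‖ ^ p := by positivity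
      rw [Real.norm_of_nonneg
        (mul_nonneg (Real.rpow_nonneg hu0 _) (Real.rpow_nonneg (norm_nonneg _) _))]
      have hy := Real.young_inequality_of_nonneg (Real.rpow_nonneg hu0 α)
        (Real.rpow_nonneg (norm_nonneg (g x - f x)) q) hconj
      rw [← Real.rpow_mul hu0, hαs, Real.rpow_one,
          ← Real.rpow_mul (norm_nonneg (g x - f x)), hqs'] at hy
      exact hy
    -- Hölder's inequality
    have hH := integral_mul_le_Lp_mul_Lq_of_nonneg hconj
      (Filter.Eventually.of_forall fun x => Real.rpow_nonneg (by positivity) α)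
      (Filter.Eventually.of_forall fun x => Real.rpow_nonneg (norm_nonneg _) q)
      hml1 hml2
    have e1 : ∫ x, ((‖f x‖ ^ p + ‖g x‖ ^ p) ^ α) ^ s ∂μ
        = (∫ x, ‖f x‖ ^ p ∂μ) + ∫ x, ‖g x‖ ^ p ∂μ := by
      rw [integral_congr_ae (Filter.Eventually.of_forall fun x => by
        have hu0 : (0:ℝ) ≤ ‖f x‖ ^ p + ‖g x‖ ^ p := by positivity
        show ((‖f x‖ ^ p + ‖g x‖ ^ p) ^ α) ^ s = ‖f x‖ ^ p + ‖g x‖ ^ p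
        rw [← Real.rpow_mul hu0, hαs, Real.rpow_one])]
      exact integral_add intA intB
    have e2 : ∫ x, (‖g x - f x‖ ^ q) ^ s' ∂μ = ∫ x, ‖g x - f x‖ ^ p ∂μ := by
      refine integral_congr_ae (Filter.Eventually.of_forall fun x => ?_)
      show (‖g x - f x‖ ^ q) ^ s' = ‖g x - f x‖ ^ p
      rw [← Real.rpow_mul (norm_nonneg _), hqs']
    rw [e1, e2] at hH
    -- main integral bound
    have hI : ∫ x, ‖‖g x‖ ^ (p - 2) • g x - ‖f x‖ ^ (p - 2) • f x‖ ^ q ∂μ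
        ≤ (p - 1) ^ q * (((∫ x, ‖f x‖ ^ p ∂μ) + ∫ x, ‖g x‖ ^ p ∂μ) ^ (1 / s)
            * (∫ x, ‖g x - f x‖ ^ p ∂μ) ^ (1 / s')) := by
      calc ∫ x, ‖‖g x‖ ^ (p - 2) • g x - ‖f x‖ ^ (p - 2) • f x‖ ^ q ∂μ
          ≤ ∫ x, (p - 1) ^ q * ((‖f x‖ ^ p + ‖g x‖ ^ p) ^ α * ‖g x - f x‖ ^ q) ∂μ :=
            integral_mono_of_nonneg
              (Filter.Eventually.of_forall fun x => Real.rpow_nonneg (norm_nonneg _) q)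
              (intprod.const_mul _) (Filter.Eventually.of_forall hpt)
        _ = (p - 1) ^ q * ∫ x, (‖f x‖ ^ p + ‖g x‖ ^ p) ^ α * ‖g x - f x‖ ^ q ∂μ :=
            integral_const_mul _ _
        _ ≤ (p - 1) ^ q * (((∫ x, ‖f x‖ ^ p ∂μ) + ∫ x, ‖g x‖ ^ p ∂μ) ^ (1 / s)
              * (∫ x, ‖g x - f x‖ ^ p ∂μ) ^ (1 / s')) :=
            mul_le_mul_of_nonneg_left hH (Real.rpow_nonneg (by linarith) q)
    have hABnn : (0:ℝ) ≤ (∫ x, ‖f x‖ ^ p ∂μ) + ∫ x, ‖g x‖ ^ p ∂μ := add_nonneg hAnn hBnn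
    have hfinal := Real.rpow_le_rpow
      (integral_nonneg fun x => Real.rpow_nonneg (norm_nonneg _) q) hI
      (le_of_lt (by positivity : (0:ℝ) < 1 / q))
    have hR : ((p - 1) ^ q * (((∫ x, ‖f x‖ ^ p ∂μ) + ∫ x, ‖g x‖ ^ p ∂μ) ^ (1 / s)
          * (∫ x, ‖g x - f x‖ ^ p ∂μ) ^ (1 / s'))) ^ (1 / q)
        = (p - 1) * (((∫ x, ‖f x‖ ^ p ∂μ) + ∫ x, ‖g x‖ ^ p ∂μ) ^ ((p - 2) / p)
            * (∫ x, ‖g x - f x‖ ^ p ∂μ) ^ (1 / p)) := by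
      rw [Real.mul_rpow (Real.rpow_nonneg (by linarith) q)
            (mul_nonneg (Real.rpow_nonneg hABnn _) (Real.rpow_nonneg hDnn _)),
          Real.mul_rpow (Real.rpow_nonneg hABnn _) (Real.rpow_nonneg hDnn _),
          ← Real.rpow_mul (by linarith : (0:ℝ) ≤ p - 1),
          ← Real.rpow_mul hABnn, ← Real.rpow_mul hDnn]
      rw [show q * (1 / q) = 1 from mul_one_div_cancel hq0.ne', Real.rpow_one]
      rw [show 1 / s * (1 / q) = (p - 2) / p by rw [hs, hq]; field_simp]
      rw [show 1 / s' * (1 / q) = 1 / p by rw [hs', hq]; field_simp; exact div_self (ne_of_gt hp1)]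
    rw [hR] at hfinal
    have h2e : (1:ℝ) ≤ (2:ℝ) ^ ((p - 2) / p) := Real.one_le_rpow one_le_two (by positivity)
    have hXnn : (0:ℝ) ≤ ((∫ x, ‖f x‖ ^ p ∂μ) + ∫ x, ‖g x‖ ^ p ∂μ) ^ ((p - 2) / p) :=
      Real.rpow_nonneg hABnn _
    have hYnn : (0:ℝ) ≤ (∫ x, ‖g x - f x‖ ^ p ∂μ) ^ (1 / p) := Real.rpow_nonneg hDnn _
    refine hfinal.trans ?_
    nlinarith [mul_nonneg (mul_nonneg hp1.le hXnn) hYnn]
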